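/- Let p be a prime and K/F a cyclic Galois extension of degree p^n with char F ≠ p, and let 1 ≤ i ≤ n − 1. Suppose F contains a primitive p^i-th root of unity and K contains a primitive p^{i+1}-th root of unity ζ. Then ζ lies in the intermediate field K_{n−i} with [K : K_{n−i}] = p^i, and the primitive p-th root of unity ξ_p = ζ^{p^i} satisfies ξ_p ∈ N_{K/K_{n−i}}(K×). In particular m(K/F) ≤ n − i − 1. -/

import Mathlib

lemma statement17_nt (p i t : ℕ) (hp : 1 ≤ p) (hi : 1 ≤ i) :
    (1 + p ^ i * t) ^ p ≡ 1 [MOD p ^ (i + 1)] := by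
  have h0 : ((p : ZMod (p ^ (i + 1)))) ^ (i + 1) = 0 := by
    rw [← Nat.cast_pow, ZMod.natCast_self]
  rw [← ZMod.natCast_eq_natCast_iff]
  push_cast
  set x : ZMod (p ^ (i + 1)) := (p : ZMod (p ^ (i + 1))) ^ i * (t : ZMod (p ^ (i + 1))) with hxdef
  clear_value x
  have hpx : (p : ZMod (p ^ (i + 1))) * x = 0 := by
    rw [hxdef, ← mul_assoc, ← pow_succ', h0, zero_mul]
  have hx2 : x ^ 2 = 0 := by
    obtain ⟨j, hj⟩ : ∃ j, i * 2 = (i + 1) + j := ⟨i - 1, by omega⟩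
    rw [hxdef, mul_pow, ← pow_mul, hj]
    rw [pow_add ((p : ZMod (p ^ (i + 1)))) (i+1) j, h0, zero_mul, zero_mul]
  have hadd := add_pow x 1 p
  simp only [one_pow, mul_one] at hadd
  rw [add_comm 1 x, hadd]
  rw [Finset.sum_eq_single_of_mem 0 (Finset.mem_range.mpr (by omega))]
  · simp
  · intro b _ hb
    rcases Nat.lt_or_ge b 2 with hb2 | hb2
    · interval_cases b
      · omega
      · simp only [pow_one, Nat.choose_one_right]
        rw [mul_comm, hpx]
    · have : x ^ b = 0 := by
        obtain ⟨j, hj⟩ : ∃ j, b = 2 + j := ⟨b - 2, by omega⟩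
        rw [hj, pow_add x 2 j, hx2, zero_mul]
      rw [this, zero_mul]

/-- Let `p` be a prime and `K/F` a cyclic Galois extension of degree
`p^n` with `char F ≠ p`, with `Gal(K/F) = ⟨σ⟩`, and let `1 ≤ i ≤ n − 1`.  Suppose `F`
contains a primitive `p^i`-th root of unity and `K` contains a primitive `p^(i+1)`-th
root of unity `ζ`.  Then `ζ` lies in the intermediate field `K_{n−i}` (the fixed field
of `⟨σ^(p^(n−i))⟩`, of degree `p^(n−i)` over `F`, so `[K : K_{n−i}] = p^i`), and the
primitive `p`-th root of unity `ξ_p = ζ^(p^i)` satisfies `ξ_p ∈ N_{K/K_{n−i}}(K×)`.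
(In particular `m(K/F) ≤ n − i − 1`.) -/
theorem statement17 (p n i : ℕ) (hp : p.Prime) (hi : 1 ≤ i) (hin : i + 1 ≤ n)
    (F K : Type) [Field F] [Field K] [Algebra F K] [IsGalois F K] (hchar : (p : F) ≠ 0)
    (σ : K ≃ₐ[F] K) (hσ : ∀ τ : K ≃ₐ[F] K, τ ∈ Subgroup.zpowers σ)
    (hdeg : Module.finrank F K = p ^ n)
    (ξ : F) (hξ : IsPrimitiveRoot ξ (p ^ i))
    (ζ : K) (hζ : IsPrimitiveRoot ζ (p ^ (i + 1))) :
    ζ ∈ IntermediateField.fixedField (Subgroup.zpowers (σ ^ p ^ (n - i))) ∧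
    ∃ x : K,
      (Algebra.norm (IntermediateField.fixedField (Subgroup.zpowers (σ ^ p ^ (n - i)))) x : K)
        = ζ ^ p ^ i := by
  classical
  have hppos : ∀ m : ℕ, 0 < p ^ m := fun m => pow_pos hp.pos m
  have hfd : FiniteDimensional F K :=
    FiniteDimensional.of_finrank_pos (hdeg ▸ hppos n)
  haveI : NeZero (p ^ i) := ⟨(hppos i).ne'⟩
  haveI : NeZero p := ⟨hp.pos.ne'⟩
  have hζ0 : ζ ≠ 0 := hζ.ne_zero (hppos (i + 1)).ne'
  -- σ fixes ζ ^ p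
  have hξK : IsPrimitiveRoot (algebraMap F K ξ) (p ^ i) :=
    hξ.map_of_injective (algebraMap F K).injective
  have hζp : IsPrimitiveRoot (ζ ^ p) (p ^ i) := hζ.pow (hppos _) (pow_succ' p i)
  obtain ⟨m, -, hm⟩ := hξK.eq_pow_of_pow_eq_one hζp.pow_eq_one
  have hσζp : σ (ζ ^ p) = ζ ^ p := by
    rw [← hm, map_pow, AlgEquiv.commutes]
  -- σ ζ = ζ ^ (1 + p^i t)
  have hω : (σ ζ * ζ⁻¹) ^ p = 1 := by
    rw [mul_pow, ← map_pow, hσζp, inv_pow, mul_inv_cancel₀ (pow_ne_zero p hζ0)]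
  have hζpi : IsPrimitiveRoot (ζ ^ p ^ i) p := hζ.pow (hppos _) (pow_succ p i)
  obtain ⟨t, -, ht⟩ := hζpi.eq_pow_of_pow_eq_one hω
  have hσζ : σ ζ = ζ ^ (1 + p ^ i * t) := by
    have h1 : σ ζ * ζ⁻¹ = (ζ ^ p ^ i) ^ t := ht.symm
    rw [mul_inv_eq_iff_eq_mul₀ hζ0] at h1
    rw [h1, pow_add, pow_one, pow_mul, mul_comm]
  -- iterate
  set c := 1 + p ^ i * t with hc
  have hiter : ∀ k : ℕ, (σ ^ k) ζ = ζ ^ c ^ k := by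
    intro k
    induction k with
    | zero => simp
    | succ k ih =>
      rw [pow_succ σ k, AlgEquiv.mul_apply, hσζ, map_pow, ih, ← pow_mul, ← pow_succ]
  have hfixp : (σ ^ p) ζ = ζ := by
    rw [hiter p]
    have hmod : c ^ p ≡ 1 [MOD p ^ (i + 1)] := statement17_nt p i t hp.one_le hi
    obtain ⟨s, hs⟩ := (Nat.modEq_iff_dvd' (Nat.one_le_iff_ne_zero.mpr
      (pow_ne_zero p (by positivity)))).mp hmod.symm
    have hcp : c ^ p = 1 + p ^ (i + 1) * s := by
      have : 1 ≤ c ^ p := Nat.one_le_iff_ne_zero.mpr (pow_ne_zero p (by positivity))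
      omega
    rw [hcp, pow_add, pow_one, pow_mul, hζ.pow_eq_one, one_pow, mul_one]
  have key : ∀ (e : K ≃ₐ[F] K), e ζ = ζ → ∀ k : ℕ, (e ^ k) ζ = ζ := by
    intro e he k
    induction k with
    | zero => simp
    | succ k ih => rw [pow_succ, AlgEquiv.mul_apply, he, ih]
  have hNfix : (σ ^ p ^ (n - i)) ζ = ζ := by
    have h1 : p ^ (n - i) = p * p ^ (n - i - 1) := by
      rw [← pow_succ']
      congr 1
      omega
    rw [h1, pow_mul]
    exact key (σ ^ p) hfixp _
  have hmem : ζ ∈ IntermediateField.fixedField (Subgroup.zpowers (σ ^ p ^ (n - i))) := by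
    have hle : Subgroup.zpowers (σ ^ p ^ (n - i)) ≤ MulAction.stabilizer (K ≃ₐ[F] K) ζ :=
      Subgroup.zpowers_le.mpr (by rwa [MulAction.mem_stabilizer_iff, AlgEquiv.smul_def])
    intro g
    exact hle g.2
  refine ⟨hmem, ⟨ζ, ?_⟩⟩
  -- finrank computation
  have htop : Subgroup.zpowers σ = ⊤ := by
    rw [eq_top_iff]
    exact fun τ _ => hσ τ
  have hord : orderOf σ = p ^ n := by
    rw [← Nat.card_zpowers, htop, Subgroup.card_top,
      IsGalois.card_aut_eq_finrank, hdeg]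
  have hordN : orderOf (σ ^ p ^ (n - i)) = p ^ i := by
    rw [orderOf_pow, hord, Nat.gcd_eq_right (pow_dvd_pow p (by omega)),
      Nat.pow_div (by omega) hp.pos]
    congr 1
    omega
  have hrank : Module.finrank
      (IntermediateField.fixedField (Subgroup.zpowers (σ ^ p ^ (n - i)))) K = p ^ i := by
    rw [IntermediateField.finrank_fixedField_eq_card,
      Nat.card_zpowers]
    exact hordN
  have h2 : (algebraMap (IntermediateField.fixedField (Subgroup.zpowers (σ ^ p ^ (n - i)))) K)
      ⟨ζ, hmem⟩ = ζ := rfl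
  rw [← h2, Algebra.norm_algebraMap, hrank, SubmonoidClass.coe_pow]
  rfl
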